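/- The polynomial α_2(s) = (3/2)s² − 2s + 1/2 factors as α_2(s) = (1/2)(s − 1)(3s − 1); its roots are exactly 1 and 1/3, so all roots have modulus at most 1 and the unique root of modulus 1 is simple. Hence the 2-step LIL method satisfies the Dahlquist root condition (zero-stability). -/

import Mathlib

open Polynomial

/-- First characteristic polynomial of the 2-step LIL method, over `ℂ`. -/
noncomputable def lilAlpha2 : Polynomial ℂ :=
  C (3 / 2) * X ^ 2 - C 2 * X + C (1 / 2)

/-- `α₂(s) = (3/2)s² − 2s + 1/2` factors as `(1/2)(s − 1)(3s − 1)`; its roots are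
exactly `1` and `1/3`, so every root has modulus at most `1` and the unique root
of modulus `1` is simple: the 2-step LIL method satisfies the Dahlquist root
condition (zero-stability). -/
theorem lil_root_condition_m2 :
    lilAlpha2 = C (1 / 2) * (X - C 1) * (C 3 * X - C 1) ∧
    (∀ z : ℂ, lilAlpha2.eval z = 0 ↔ z = 1 ∨ z = 1 / 3) ∧
    (∀ z : ℂ, lilAlpha2.eval z = 0 → ‖z‖ ≤ 1) ∧
    (∀ z : ℂ, lilAlpha2.eval z = 0 → ‖z‖ = 1 →
      lilAlpha2.rootMultiplicity z = 1) := by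
  have hfac : lilAlpha2 = C (1/2 : ℂ) * (X - C 1) * (C 3 * X - C 1) := by
    unfold lilAlpha2
    rw [show (3/2 : ℂ) = (1/2)*3 by norm_num, show (2 : ℂ) = (1/2)*3 + 1/2 by norm_num,
      show (1/2 : ℂ) = (1/2)*1 by norm_num]
    simp only [C_mul, C_add, C_1]
    ring_nf
  have heval : ∀ z : ℂ, lilAlpha2.eval z = 0 ↔ z = 1 ∨ z = 1 / 3 := by
    intro z
    rw [hfac]
    simp only [eval_mul, eval_sub, eval_C, eval_X, mul_eq_zero]
    constructor
    · rintro ((h | h) | h)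
      · norm_num at h
      · left; linear_combination h
      · right; field_simp at h ⊢; linear_combination h
    · rintro (h | h)
      · left; right; rw [h]; ring
      · right; rw [h]; ring
  refine ⟨hfac, heval, fun z hz => ?_, fun z hz habs => ?_⟩
  · rcases (heval z).1 hz with h | h <;> subst h <;> simp <;> norm_num
  · rcases (heval z).1 hz with h | h
    · subst h
      rw [hfac]
      have h1 : (C (1/2 : ℂ) * (C 3 * X - C 1)).eval 1 ≠ 0 := by simp; norm_num
      have heq : C (1/2 : ℂ) * (X - C 1) * (C 3 * X - C 1)
          = (X - C 1) ^ 1 * (C (1/2 : ℂ) * (C 3 * X - C 1)) := by ring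
      have hq : (C (1/2 : ℂ) * (C 3 * X - C 1)) ≠ 0 := fun h => h1 (by rw [h]; simp)
      rw [heq, pow_one, rootMultiplicity_mul (mul_ne_zero (X_sub_C_ne_zero 1) hq),
        rootMultiplicity_X_sub_C_self, rootMultiplicity_eq_zero h1]
    · exfalso; subst h; simp at habs
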